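/- Let G be a graph with lists L of size ⌈M/2⌉ + 1 (with Δ(G) ≤ M), let u be a vertex of degree 1 with neighbor v, and let c be a linear L-coloring of G − u. Then the number of colors in L(u) that equal c(v) or appear on at least two neighbors of v is at most ⌊(M−1)/2⌋ + 1, so at least one color of L(u) remains available and c extends to a linear L-coloring of G. -/

import Mathlib

open SimpleGraph Finset

/-- The subgraph of `G` induced by the union of the two color classes `a` and `b`
of the coloring `c` (as a spanning subgraph of `G`). -/
def pairGraph {V α : Type*} (G : SimpleGraph V) (c : V → α) (a b : α) : SimpleGraph V where
  Adj x y := G.Adj x y ∧ (c x = a ∨ c x = b) ∧ (c y = a ∨ c y = b)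
  symm := ⟨fun x y h => ⟨h.1.symm, h.2.2, h.2.1⟩⟩
  loopless := ⟨fun x h => G.irrefl h.1⟩

/-- A graph has maximum degree at most two:  no vertex has three distinct neighbors. -/
def MaxDegLE2 {V : Type*} (H : SimpleGraph V) : Prop :=
  ∀ v x y z : V, H.Adj v x → H.Adj v y → H.Adj v z → x = y ∨ x = z ∨ y = z

/-- `c` is a linear coloring of `G`: a proper coloring in which the union of any
two color classes induces a linear forest (an acyclic graph of maximum degree at most two,
i.e. a disjoint union of paths). -/
def IsLinearColoring {V α : Type*} (G : SimpleGraph V) (c : V → α) : Prop :=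
  (∀ ⦃x y⦄, G.Adj x y → c x ≠ c y) ∧
  ∀ a b : α, (pairGraph G c a b).IsAcyclic ∧ MaxDegLE2 (pairGraph G c a b)

/-- The linear chromatic number `lc(G)`. -/
noncomputable def linChromNum {V : Type*} (G : SimpleGraph V) : ℕ :=
  sInf {n : ℕ | ∃ c : V → Fin n, IsLinearColoring G c}

/-- `G` is linearly `k`-choosable: from any lists of size at least `k` one can choose
a linear coloring. -/
def LinChoosable {V : Type*} (G : SimpleGraph V) (k : ℕ) : Prop :=
  ∀ L : V → Finset ℕ, (∀ v, k ≤ (L v).card) →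
    ∃ c : V → ℕ, (∀ v, c v ∈ L v) ∧ IsLinearColoring G c

/-- The linear list chromatic number `lc_ℓ(G)`. -/
noncomputable def linListChromNum {V : Type*} (G : SimpleGraph V) : ℕ :=
  sInf {k : ℕ | LinChoosable G k}

/-- `mad(G) ≤ q`: every nonempty subgraph has average degree at most `q`. -/
def MadLE {V : Type*} [Fintype V] (G : SimpleGraph V) (q : ℚ) : Prop :=
  ∀ H : G.Subgraph, H.verts.Nonempty →
    2 * (H.edgeSet.ncard : ℚ) ≤ q * (H.verts.ncard : ℚ)

/-- `mad(G) < q`: every nonempty subgraph has average degree less than `q`. -/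
def MadLT {V : Type*} [Fintype V] (G : SimpleGraph V) (q : ℚ) : Prop :=
  ∀ H : G.Subgraph, H.verts.Nonempty →
    2 * (H.edgeSet.ncard : ℚ) < q * (H.verts.ncard : ℚ)

/-- `mad(G) ≥ q`: some nonempty subgraph has average degree at least `q`. -/
def MadGE {V : Type*} [Fintype V] (G : SimpleGraph V) (q : ℚ) : Prop :=
  ∃ H : G.Subgraph, H.verts.Nonempty ∧ q * (H.verts.ncard : ℚ) ≤ 2 * (H.edgeSet.ncard : ℚ)

/-- `mad(G) = q`: the maximum average degree over nonempty subgraphs equals `q`. -/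
def MadEq {V : Type*} [Fintype V] (G : SimpleGraph V) (q : ℚ) : Prop :=
  MadLE G q ∧ ∃ H : G.Subgraph, H.verts.Nonempty ∧
    2 * (H.edgeSet.ncard : ℚ) = q * (H.verts.ncard : ℚ)

/-- `H` is a minor of `G`. -/
def IsMinorOf {W V : Type*} (H : SimpleGraph W) (G : SimpleGraph V) : Prop :=
  ∃ f : V → Option W,
    (∀ w : W, ∃ v : V, f v = some w) ∧
    (∀ w : W, (G.induce {v | f v = some w}).Connected) ∧
    (∀ w₁ w₂ : W, H.Adj w₁ w₂ →
      ∃ v₁ v₂ : V, f v₁ = some w₁ ∧ f v₂ = some w₂ ∧ G.Adj v₁ v₂)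

/-- Planarity, via Wagner's theorem: no `K₅` minor and no `K_{3,3}` minor. -/
def IsPlanar {V : Type*} (G : SimpleGraph V) : Prop :=
  ¬ IsMinorOf (⊤ : SimpleGraph (Fin 5)) G ∧
  ¬ IsMinorOf (completeBipartiteGraph (Fin 3) (Fin 3)) G

private def comapHom {V : Type*} (H : SimpleGraph V) (S : Set V) :
    H.comap (Subtype.val : S → V) →g H := ⟨Subtype.val, fun h => h⟩

private lemma lift_walk {V : Type*} {H : SimpleGraph V} {S : Set V} :
    ∀ {x y : V} (p : H.Walk x y) (_ : ∀ z ∈ p.support, z ∈ S) (hx : x ∈ S) (hy : y ∈ S),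
    ∃ q : (H.comap (Subtype.val : S → V)).Walk ⟨x, hx⟩ ⟨y, hy⟩,
      q.map (comapHom H S) = p := by
  intro x y p
  induction p with
  | nil => exact fun _ _ _ => ⟨.nil, rfl⟩
  | @cons x m y h p ih =>
    intro hp hx hy
    have hm : m ∈ S := hp m (by simp)
    obtain ⟨q, hq⟩ := ih (fun z hz => hp z (by simp [hz])) hm hy
    exact ⟨.cons (show H.Adj (⟨x,hx⟩ : S).1 (⟨m,hm⟩ : S).1 from h) q,
      by exact congrArg (SimpleGraph.Walk.cons h) hq⟩

private lemma first_edge_mem {V : Type*} {H : SimpleGraph V} {x y : V} (p : H.Walk x y)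
    (hp : ¬ p.Nil) : s(x, p.getVert 1) ∈ p.edges := by
  cases p with
  | nil => simp at hp
  | cons h q => simp [SimpleGraph.Walk.getVert_cons_succ]


/-- Let `G` have lists of size `⌈M/2⌉ + 1` with `Δ(G) ≤ M`, let `u` be a vertex of degree `1`
with neighbor `v`, and let `c` be a linear `L`-coloring of `G − u`.  Then at most
`⌊(M−1)/2⌋ + 1` colors of `L(u)` equal `c(v)` or appear at least twice among the neighbors
of `v`, and `c` extends to a linear `L`-coloring of `G`. -/
theorem extend_linear_coloring_at_leaf {V : Type*} [Fintype V] [DecidableEq V]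
    (G : SimpleGraph V) [DecidableRel G.Adj] (M : ℕ) (L : V → Finset ℕ)
    (hL : ∀ x, (L x).card = (M + 1) / 2 + 1) (hΔ : G.maxDegree ≤ M)
    (u v : V) (hu : G.degree u = 1) (huv : G.Adj u v)
    (c : V → ℕ)
    (hc : IsLinearColoring (G.induce {x | x ≠ u}) fun x => c x.1)
    (hcL : ∀ x, x ≠ u → c x ∈ L x) :
    ((L u).filter fun a => a = c v ∨
        2 ≤ ((G.neighborFinset v).filter fun x => x ≠ u ∧ c x = a).card).card
      ≤ (M - 1) / 2 + 1 ∧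
    ∃ c' : V → ℕ, (∀ x, x ≠ u → c' x = c x) ∧ (∀ x, c' x ∈ L x) ∧
      IsLinearColoring G c' := by
  classical
  have hMv : G.degree v ≤ M := le_trans (G.degree_le_maxDegree v) hΔ
  have hM1 : 1 ≤ M := hu ▸ le_trans (G.degree_le_maxDegree u) hΔ
  have hvu : v ≠ u := fun h => G.irrefl (h ▸ huv)
  have hnbr : ∀ z, G.Adj u z → z = v := by
    obtain ⟨w, hw⟩ := Finset.card_eq_one.mp (hu : (G.neighborFinset u).card = 1)
    intro z hz
    have hzv : z ∈ G.neighborFinset u := by rwa [SimpleGraph.mem_neighborFinset]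
    have hvv : v ∈ G.neighborFinset u := by rwa [SimpleGraph.mem_neighborFinset]
    rw [hw, Finset.mem_singleton] at hzv hvv
    rw [hzv, hvv]
  -- counting
  have key : ∀ B₂ : Finset ℕ,
      (∀ a ∈ B₂, 2 ≤ ((G.neighborFinset v).filter fun x => x ≠ u ∧ c x = a).card) →
      B₂.card ≤ (M - 1) / 2 := by
    intro B₂ hB₂
    have hdisj : ∀ a ∈ B₂, ∀ b ∈ B₂, a ≠ b →
        Disjoint ((G.neighborFinset v).filter fun x => x ≠ u ∧ c x = a)
          ((G.neighborFinset v).filter fun x => x ≠ u ∧ c x = b) := by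
      intro a _ b _ hab
      refine Finset.disjoint_left.mpr fun x hxa hxb => hab ?_
      rw [Finset.mem_filter] at hxa hxb
      rw [← hxa.2.2, hxb.2.2]
    have hsub : (B₂.biUnion fun a => (G.neighborFinset v).filter fun x => x ≠ u ∧ c x = a)
        ⊆ (G.neighborFinset v).erase u := by
      intro x hx
      simp only [Finset.mem_biUnion, Finset.mem_filter] at hx
      obtain ⟨a, _, hx1, hx2, _⟩ := hx
      exact Finset.mem_erase.mpr ⟨hx2, hx1⟩
    have hcard2 : 2 * B₂.card ≤ M - 1 := by
      calc 2 * B₂.card = ∑ _a ∈ B₂, 2 := by rw [Finset.sum_const, smul_eq_mul, mul_comm]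
      _ ≤ ∑ a ∈ B₂, ((G.neighborFinset v).filter fun x => x ≠ u ∧ c x = a).card :=
          Finset.sum_le_sum hB₂
      _ = (B₂.biUnion fun a => (G.neighborFinset v).filter fun x => x ≠ u ∧ c x = a).card :=
          (Finset.card_biUnion hdisj).symm
      _ ≤ ((G.neighborFinset v).erase u).card := Finset.card_le_card hsub
      _ = G.degree v - 1 := by
          rw [Finset.card_erase_of_mem (by rwa [SimpleGraph.mem_neighborFinset, adj_comm])]
          rfl
      _ ≤ M - 1 := Nat.sub_le_sub_right hMv 1
    omega
  have hBcard : ((L u).filter fun a => a = c v ∨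
      2 ≤ ((G.neighborFinset v).filter fun x => x ≠ u ∧ c x = a).card).card
      ≤ (M - 1) / 2 + 1 := by
    have h2 := key ((L u).filter fun a =>
        2 ≤ ((G.neighborFinset v).filter fun x => x ≠ u ∧ c x = a).card)
      (fun a ha => (Finset.mem_filter.mp ha).2)
    have hsub : ((L u).filter fun a => a = c v ∨
        2 ≤ ((G.neighborFinset v).filter fun x => x ≠ u ∧ c x = a).card)
        ⊆ insert (c v) ((L u).filter fun a =>
            2 ≤ ((G.neighborFinset v).filter fun x => x ≠ u ∧ c x = a).card) := by
      intro a ha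
      rw [Finset.mem_filter] at ha
      rcases ha.2 with h | h
      · exact Finset.mem_insert.mpr (Or.inl h)
      · exact Finset.mem_insert.mpr (Or.inr (Finset.mem_filter.mpr ⟨ha.1, h⟩))
    calc _ ≤ _ := Finset.card_le_card hsub
    _ ≤ _ + 1 := Finset.card_insert_le _ _
    _ ≤ (M - 1) / 2 + 1 := by omega
  refine ⟨hBcard, ?_⟩
  -- choose a good colour
  obtain ⟨a, haL, haB⟩ : ∃ a ∈ L u, a ∉ (L u).filter fun a => a = c v ∨
      2 ≤ ((G.neighborFinset v).filter fun x => x ≠ u ∧ c x = a).card := by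
    by_contra hcon
    push_neg at hcon
    have := Finset.card_le_card hcon
    rw [hL u] at this
    omega
  rw [Finset.mem_filter, not_and, not_or, not_le] at haB
  obtain ⟨hacv, haF⟩ := haB haL
  have haF : ((G.neighborFinset v).filter fun x => x ≠ u ∧ c x = a).card ≤ 1 := by omega
  set c' : V → ℕ := Function.update c u a with hc'
  have hcu' : c' u = a := Function.update_self u a c
  have hcx : ∀ x, x ≠ u → c' x = c x := fun x hx => Function.update_of_ne hx a c
  have hprop : ∀ x y : V, x ≠ u → y ≠ u → G.Adj x y → c x ≠ c y := by
    intro x y hx hy hxy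
    exact hc.1 (show (G.induce {x | x ≠ u}).Adj ⟨x, hx⟩ ⟨y, hy⟩ from hxy)
  have hproper : ∀ ⦃x y⦄, G.Adj x y → c' x ≠ c' y := by
    intro x y hxy
    by_cases hx : x = u
    · have hyv : y = v := hnbr y (hx ▸ hxy)
      rw [hx, hyv, hcu', hcx v hvu]; exact hacv
    · by_cases hy : y = u
      · have hxv : x = v := hnbr x (hy ▸ hxy).symm
        rw [hy, hxv, hcu', hcx v hvu]
        exact fun h => hacv h.symm
      · rw [hcx x hx, hcx y hy]; exact hprop x y hx hy hxy
  refine ⟨c', hcx, ?_, hproper, ?_⟩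
  · intro x
    by_cases hx : x = u
    · subst hx; rw [hcu']; exact haL
    · rw [hcx x hx]; exact hcL x hx
  intro p q
  have hlift : ∀ (x y : V) (hx : x ≠ u) (hy : y ≠ u),
      (pairGraph G c' p q).Adj x y →
      (pairGraph (G.induce {x | x ≠ u}) (fun z => c z.1) p q).Adj ⟨x, hx⟩ ⟨y, hy⟩ := by
    intro x y hx hy h
    refine ⟨h.1, ?_, ?_⟩
    · show c x = p ∨ c x = q
      rw [← hcx x hx]; exact h.2.1
    · show c y = p ∨ c y = q
      rw [← hcx y hy]; exact h.2.2
  have hkey : ∀ y z : V, (pairGraph G c' p q).Adj v u → (pairGraph G c' p q).Adj v y →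
      (pairGraph G c' p q).Adj v z → y ≠ u → z ≠ u → y = z := by
    intro y z hxu hy hz hyu hzu
    by_contra hyz
    have hcv : c v = p ∨ c v = q := by rw [← hcx v hvu]; exact hxu.2.1
    have hca : a = p ∨ a = q := by rw [← hcu']; exact hxu.2.2
    have hcy : c y = p ∨ c y = q := by rw [← hcx y hyu]; exact hy.2.2
    have hcz : c z = p ∨ c z = q := by rw [← hcx z hzu]; exact hz.2.2
    have hyv : c v ≠ c y := hprop v y hvu hyu hy.1
    have hzv : c v ≠ c z := hprop v z hvu hzu hz.1
    have hya : c y = a := by omega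
    have hza : c z = a := by omega
    have hyF : y ∈ (G.neighborFinset v).filter fun x => x ≠ u ∧ c x = a :=
      Finset.mem_filter.mpr ⟨(G.mem_neighborFinset v y).mpr hy.1, hyu, hya⟩
    have hzF : z ∈ (G.neighborFinset v).filter fun x => x ≠ u ∧ c x = a :=
      Finset.mem_filter.mpr ⟨(G.mem_neighborFinset v z).mpr hz.1, hzu, hza⟩
    have : 1 < ((G.neighborFinset v).filter fun x => x ≠ u ∧ c x = a).card :=
      Finset.one_lt_card.mpr ⟨y, hyF, z, hzF, hyz⟩
    omega
  constructor
  · -- acyclicity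
    intro w W hW
    by_cases husup : u ∈ W.support
    · have hW2 := hW.rotate husup
      have h3 := hW2.three_le_length
      generalize hQ : W.rotate u husup = Q at hW2 h3
      cases Q with
      | nil => simp at h3
      | @cons _ b _ h P =>
        rw [SimpleGraph.Walk.cons_isCycle_iff] at hW2
        have hbv : b = v := hnbr b h.1
        obtain ⟨hP, hE⟩ := hW2
        have hlen : 2 ≤ P.length := by
          rw [SimpleGraph.Walk.length_cons] at h3; omega
        have hnil : ¬ P.reverse.Nil := by
          rw [SimpleGraph.Walk.not_nil_iff_lt_length, SimpleGraph.Walk.length_reverse]; omega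
        have hz : (pairGraph G c' p q).Adj u (P.reverse.getVert 1) :=
          P.reverse.adj_snd hnil
        have hzv : P.reverse.getVert 1 = v := hnbr _ hz.1
        have hmem := first_edge_mem P.reverse hnil
        rw [SimpleGraph.Walk.edges_reverse, List.mem_reverse] at hmem
        have heq : s(u, P.reverse.getVert 1) = s(u, b) := by rw [hzv, hbv]
        exact hE (heq ▸ hmem)
    · have hsup : ∀ z ∈ W.support, z ∈ {x : V | x ≠ u} := fun z hz h => husup (h ▸ hz)
      have hw : w ∈ {x : V | x ≠ u} := hsup w W.start_mem_support
      obtain ⟨Wq, hWq⟩ := lift_walk W hsup hw hw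
      have hinj : Function.Injective ⇑(comapHom (pairGraph G c' p q) {x : V | x ≠ u}) :=
        fun a b hab => Subtype.val_injective hab
      have hWqc : Wq.IsCycle :=
        (SimpleGraph.Walk.map_isCycle_iff_of_injective hinj).mp (hWq ▸ hW)
      have hgraph : (pairGraph G c' p q).comap (Subtype.val : {x : V | x ≠ u} → V)
          = pairGraph (G.induce {x : V | x ≠ u}) (fun z => c z.1) p q := by
        ext ⟨x, hx⟩ ⟨y, hy⟩
        constructor
        · rintro ⟨h1, h2, h3⟩
          exact ⟨h1, show c x = p ∨ c x = q by rw [← hcx x hx]; exact h2,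
            show c y = p ∨ c y = q by rw [← hcx y hy]; exact h3⟩
        · rintro ⟨h1, h2, h3⟩
          refine ⟨h1, show c' x = p ∨ c' x = q by rw [hcx x hx]; exact h2,
            show c' y = p ∨ c' y = q by rw [hcx y hy]; exact h3⟩
      exact (hgraph.symm ▸ (hc.2 p q).1) Wq hWqc
  · -- max degree
    intro w x y z hx hy hz
    by_cases hw : w = u
    · have hxv : x = v := hnbr x (hw ▸ hx.1)
      have hyv : y = v := hnbr y (hw ▸ hy.1)
      left; rw [hxv, hyv]
    · by_cases hxu : x = u
      · by_cases hyu : y = u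
        · left; rw [hxu, hyu]
        · by_cases hzu : z = u
          · right; left; rw [hxu, hzu]
          · have hwv : w = v := hnbr w (hxu ▸ hx.1).symm
            rw [hwv] at hx hy hz; rw [hxu] at hx
            right; right; exact hkey y z hx hy hz hyu hzu
      · by_cases hyu : y = u
        · by_cases hzu : z = u
          · right; right; rw [hyu, hzu]
          · have hwv : w = v := hnbr w (hyu ▸ hy.1).symm
            rw [hwv] at hx hy hz; rw [hyu] at hy
            right; left; exact hkey x z hy hx hz hxu hzu
        · by_cases hzu : z = u
          · have hwv : w = v := hnbr w (hzu ▸ hz.1).symm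
            rw [hwv] at hx hy hz; rw [hzu] at hz
            left; exact hkey x y hz hx hy hxu hyu
          · have := (hc.2 p q).2 ⟨w, hw⟩ ⟨x, hxu⟩ ⟨y, hyu⟩ ⟨z, hzu⟩
              (hlift w x hw hxu hx) (hlift w y hw hyu hy) (hlift w z hw hzu hz)
            rcases this with h | h | h
            · left; exact congrArg Subtype.val h
            · right; left; exact congrArg Subtype.val h
            · right; right; exact congrArg Subtype.val h
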